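/- (Best approximation with three sets — strengthened Ryu.) Let C₁, C₂, C₃ ⊆ H be nonempty closed convex sets with nonempty intersection C := C₁ ∩ C₂ ∩ C₃, and let q ∈ H be such that there exists x ∈ H with q − x ∈ N_{C₁}(x) + N_{C₂}(x) + N_{C₃}(x). Let β ∈ (0,1) and λ ∈ (0,1]. Let (x_k), (y_k) be sequences in H and define for all k: u_k := P_{C₁}(β·x_k + (1−β)q); v_k := P_{C₂}(β(u_k + y_k) − (2β − 1)q); w_k := P_{C₃}(β(u_k − x_k + v_k − y_k) + q); x_{k+1} = x_k + λ(w_k − u_k); y_{k+1} = y_k + λ(w_k − v_k). Then u_k → P_C(q) in norm. Furthermore, if λ ≠ 1, there is x ∈ H such that x_k ⇀ x weakly and P_{C₁}(β·x + (1−β)q) = P_C(q). -/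

import Mathlib

open scoped RealInnerProductSpace
open Filter Topology

/-- The normal cone to a set `C` at `x`. -/
def normalCone {H : Type*} [NormedAddCommGroup H] [InnerProductSpace ℝ H]
    (C : Set H) (x : H) : Set H :=
  {u : H | x ∈ C ∧ ∀ c ∈ C, ⟪u, c - x⟫ ≤ 0}

/-- `P` is the nearest-point projector onto `C`. -/
def IsProjector {H : Type*} [NormedAddCommGroup H] [InnerProductSpace ℝ H]
    (C : Set H) (P : H → H) : Prop :=
  ∀ z : H, P z ∈ C ∧ ∀ c ∈ C, ‖z - P z‖ ≤ ‖z - c‖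

section Aux

variable {H : Type*} [NormedAddCommGroup H] [InnerProductSpace ℝ H]

lemma sRyu_normalCone_smul {C : Set H} {a n : H} {t : ℝ} (ht : 0 ≤ t)
    (hn : n ∈ normalCone C a) : t • n ∈ normalCone C a := by
  refine ⟨hn.1, fun c hc => ?_⟩
  rw [real_inner_smul_left]
  exact mul_nonpos_of_nonneg_of_nonpos ht (hn.2 c hc)

lemma sRyu_normalCone_mono {C : Set H} {a a' n n' : H} (hn : n ∈ normalCone C a)
    (hn' : n' ∈ normalCone C a') : 0 ≤ ⟪n - n', a - a'⟫ := by
  have h1 := hn.2 a' hn'.1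
  have h2 := hn'.2 a hn.1
  have heq : ⟪n - n', a - a'⟫ = -⟪n, a' - a⟫ - ⟪n', a - a'⟫ := by
    rw [inner_sub_left]
    rw [show a' - a = -(a - a') by abel, inner_neg_right]
    ring
  rw [heq]; linarith

lemma sRyu_isProjector_normalCone {C : Set H} {P : H → H} (hconv : Convex ℝ C)
    (hP : IsProjector C P) (z : H) : z - P z ∈ normalCone C (P z) := by
  obtain ⟨hmem, hle⟩ := hP z
  refine ⟨hmem, fun c hc => ?_⟩
  have key : ∀ t : ℝ, 0 < t → t ≤ 1 → 2 * ⟪z - P z, c - P z⟫ ≤ t * ‖c - P z‖ ^ 2 := by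
    intro t ht ht1
    have hmem' : P z + t • (c - P z) ∈ C := by
      have := hconv hmem hc (by linarith : (0:ℝ) ≤ 1 - t) ht.le (by ring)
      convert this using 1
      module
    have h := hle _ hmem'
    have hrw : z - (P z + t • (c - P z)) = (z - P z) - t • (c - P z) := by abel
    rw [hrw] at h
    have hsq : ‖z - P z‖ ^ 2 ≤ ‖(z - P z) - t • (c - P z)‖ ^ 2 := by
      have := mul_self_le_mul_self (norm_nonneg _) h
      nlinarith [this]
    have hexp : ‖(z - P z) - t • (c - P z)‖ ^ 2
        = ‖z - P z‖ ^ 2 - 2 * (t * ⟪z - P z, c - P z⟫) + t ^ 2 * ‖c - P z‖ ^ 2 := by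
      rw [norm_sub_sq_real, real_inner_smul_right, norm_smul, Real.norm_eq_abs,
        abs_of_pos ht, mul_pow]
    rw [hexp] at hsq
    nlinarith [hsq, sq_nonneg t]
  by_contra hpos
  push_neg at hpos
  set a := ⟪z - P z, c - P z⟫ with ha
  set B := ‖c - P z‖ ^ 2 with hB
  have hB0 : 0 ≤ B := sq_nonneg _
  have ht0 : 0 < a / (B + a) := by
    apply div_pos hpos; linarith
  set t := min 1 (a / (B + a)) with htdef
  have h1 : 0 < t := lt_min one_pos ht0
  have h2 : t ≤ 1 := min_le_left _ _
  have := key t h1 h2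
  have h5 : t * B ≤ (a / (B + a)) * B :=
    mul_le_mul_of_nonneg_right (min_le_right _ _) hB0
  have h6 : (a / (B + a)) * B < 2 * a := by
    rw [div_mul_eq_mul_div, div_lt_iff₀ (by linarith : (0:ℝ) < B + a)]
    nlinarith
  linarith

lemma sRyu_isProjector_eq {C : Set H} {P : H → H} (hconv : Convex ℝ C)
    (hP : IsProjector C P) {z p : H} (hp : z - p ∈ normalCone C p) : P z = p := by
  have h1 := sRyu_isProjector_normalCone hconv hP z
  have h2 := sRyu_normalCone_mono h1 hp
  have heq : (z - P z) - (z - p) = -(P z - p) := by abel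
  rw [heq, inner_neg_left, neg_nonneg] at h2
  have h3 : ⟪P z - p, P z - p⟫ = 0 := le_antisymm h2 real_inner_self_nonneg
  have h4 := inner_self_eq_zero.mp h3
  have h5 : P z - p = 0 := by exact_mod_cast h4
  exact sub_eq_zero.mp h5

lemma sRyu_key_ineq (β lam : ℝ) (hβ : 0 < β) (hlam : 0 < lam) (hlam' : lam ≤ 1)
    (X Y U V W : H)
    (E1 : 0 ≤ ⟪β • X - U, U⟫) (E2 : 0 ≤ ⟪β • (U + Y) - V, V⟫)
    (E3 : 0 ≤ ⟪β • (U - X + V - Y) - W, W⟫) :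
    ‖X + lam • (W - U)‖ ^ 2 + ‖Y + lam • (W - V)‖ ^ 2
      + 2 * lam * (1 - β) / β * (‖U‖ ^ 2 + ‖V‖ ^ 2 + ‖W‖ ^ 2) ≤ ‖X‖ ^ 2 + ‖Y‖ ^ 2 := by
  simp only [inner_sub_left, inner_add_left, real_inner_smul_left] at E1 E2 E3
  rw [real_inner_self_eq_norm_sq] at E1 E2 E3
  have g1 : ‖X + lam • (W - U)‖ ^ 2 = ‖X‖ ^ 2 + 2 * (lam * (⟪X, W⟫ - ⟪X, U⟫))
      + lam ^ 2 * (‖W‖ ^ 2 - 2 * ⟪U, W⟫ + ‖U‖ ^ 2) := by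
    rw [norm_add_sq_real, real_inner_smul_right, inner_sub_right, norm_smul, mul_pow,
      Real.norm_eq_abs, sq_abs, norm_sub_sq_real, real_inner_comm W U]
  have g2 : ‖Y + lam • (W - V)‖ ^ 2 = ‖Y‖ ^ 2 + 2 * (lam * (⟪Y, W⟫ - ⟪Y, V⟫))
      + lam ^ 2 * (‖W‖ ^ 2 - 2 * ⟪V, W⟫ + ‖V‖ ^ 2) := by
    rw [norm_add_sq_real, real_inner_smul_right, inner_sub_right, norm_smul, mul_pow,
      Real.norm_eq_abs, sq_abs, norm_sub_sq_real, real_inner_comm W V]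
  rw [g1, g2]
  have q1 : 0 ≤ ‖U‖ ^ 2 - 2 * ⟪U, W⟫ + ‖W‖ ^ 2 := by
    have := norm_sub_sq_real U W; nlinarith [sq_nonneg ‖U - W‖]
  have q2 : 0 ≤ ‖V‖ ^ 2 - 2 * ⟪V, W⟫ + ‖W‖ ^ 2 := by
    have := norm_sub_sq_real V W; nlinarith [sq_nonneg ‖V - W‖]
  have q3 : 0 ≤ ‖U‖ ^ 2 - 2 * ⟪U, V⟫ + ‖V‖ ^ 2 := by
    have := norm_sub_sq_real U V; nlinarith [sq_nonneg ‖U - V‖]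
  have hll : 0 ≤ lam - lam ^ 2 := by nlinarith
  rw [div_mul_eq_mul_div, ← le_sub_iff_add_le', div_le_iff₀ hβ]
  nlinarith [mul_nonneg hlam.le E1, mul_nonneg hlam.le E2, mul_nonneg hlam.le E3,
    mul_nonneg (mul_nonneg hβ.le hll) q1, mul_nonneg (mul_nonneg hβ.le hll) q2,
    mul_nonneg (mul_nonneg hβ.le hlam.le) q3]

end Aux

section Weak

variable {H : Type*} [NormedAddCommGroup H] [InnerProductSpace ℝ H] [CompleteSpace H]

lemma sRyu_exists_weak_subseq (x : ℕ → H) (M : ℝ) (hb : ∀ k, ‖x k‖ ≤ M) :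
    ∃ p : H, ∃ φ : ℕ → ℕ, StrictMono φ ∧
      ∀ h : H, Tendsto (fun k => ⟪x (φ k), h⟫) atTop (𝓝 ⟪p, h⟫) := by
  have hM0 : 0 ≤ M := le_trans (norm_nonneg _) (hb 0)
  set s : Set (ℕ → ℝ) := Set.univ.pi (fun j => Set.Icc (-(M * ‖x j‖)) (M * ‖x j‖)) with hs
  have hFs : ∀ k, (fun j => ⟪x k, x j⟫) ∈ s := by
    intro k j _
    have h1 : |⟪x k, x j⟫| ≤ ‖x k‖ * ‖x j‖ := abs_real_inner_le_norm _ _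
    have h2 : ‖x k‖ * ‖x j‖ ≤ M * ‖x j‖ :=
      mul_le_mul_of_nonneg_right (hb k) (norm_nonneg _)
    exact abs_le.mp (le_trans h1 h2)
  have hcomp : IsCompact s := isCompact_univ_pi fun j => isCompact_Icc
  obtain ⟨l, -, φ, hφ, hconv⟩ := hcomp.isSeqCompact hFs
  have hptwise : ∀ j, Tendsto (fun k => ⟪x (φ k), x j⟫) atTop (𝓝 (l j)) := by
    intro j
    exact (tendsto_pi_nhds.mp hconv) j
  set K := (Submodule.span ℝ (Set.range x)).topologicalClosure with hK
  haveI : CompleteSpace K :=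
    (Submodule.isClosed_topologicalClosure _).completeSpace_coe
  have hxK : ∀ k, x k ∈ K := fun k =>
    Submodule.le_topologicalClosure _ (Submodule.subset_span ⟨k, rfl⟩)
  have hcs_span : ∀ g ∈ Submodule.span ℝ (Set.range x),
      CauchySeq (fun k => ⟪x (φ k), g⟫) := by
    intro g hg
    induction hg using Submodule.span_induction with
    | mem g hgmem =>
      obtain ⟨j, rfl⟩ := hgmem
      exact (hptwise j).cauchySeq
    | zero => simpa using cauchySeq_const (0:ℝ)
    | add g g' _ _ hg hg' =>
      have : (fun k => ⟪x (φ k), g + g'⟫) = fun k => ⟪x (φ k), g⟫ + ⟪x (φ k), g'⟫ := by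
        funext k; exact inner_add_right _ _ _
      rw [this]; exact hg.add hg'
    | smul c g _ hg =>
      have : (fun k => ⟪x (φ k), c • g⟫) = fun k => c * ⟪x (φ k), g⟫ := by
        funext k; exact real_inner_smul_right _ _ _
      rw [this]
      obtain ⟨a, ha⟩ := cauchySeq_tendsto_of_complete hg
      exact (ha.const_mul c).cauchySeq
  have hcs : ∀ h : H, CauchySeq (fun k => ⟪x (φ k), h⟫) := by
    intro h
    set g : H := (K.orthogonalProjectionOnto h : H) with hg
    have hinner : ∀ k, ⟪x k, h⟫ = ⟪x k, g⟫ := by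
      intro k
      have h0 : ⟪h - g, x k⟫ = 0 := by
        have := K.starProjection_inner_eq_zero h (x k) (hxK k)
        rwa [Submodule.starProjection_apply] at this
      have h0' : ⟪x k, h⟫ - ⟪x k, g⟫ = 0 := by
        rw [← inner_sub_right, real_inner_comm]; exact h0
      linarith
    have hgK : g ∈ closure ((Submodule.span ℝ (Set.range x) : Submodule ℝ H) : Set H) := by
      have hmem : g ∈ K := (K.orthogonalProjectionOnto h).2
      have hco : (K : Set H)
          = closure ((Submodule.span ℝ (Set.range x) : Submodule ℝ H) : Set H) :=
        Submodule.topologicalClosure_coe _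
      rw [← hco]
      exact hmem
    simp only [hinner]
    rw [Metric.cauchySeq_iff]
    intro ε hε
    obtain ⟨g', hg'mem, hg'close⟩ := Metric.mem_closure_iff.mp hgK (ε / (2 * (2 * M + 1)))
      (by positivity)
    obtain ⟨N, hN⟩ := Metric.cauchySeq_iff.mp (hcs_span g' hg'mem) (ε / 2) (by positivity)
    refine ⟨N, fun m hm n hn => ?_⟩
    have key : ∀ k, |⟪x (φ k), g⟫ - ⟪x (φ k), g'⟫| ≤ M * (ε / (2 * (2 * M + 1))) := by
      intro k
      have hsub : ⟪x (φ k), g⟫ - ⟪x (φ k), g'⟫ = ⟪x (φ k), g - g'⟫ := by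
        rw [inner_sub_right]
      rw [hsub]
      refine le_trans (abs_real_inner_le_norm _ _) ?_
      have h1 : ‖g - g'‖ ≤ ε / (2 * (2 * M + 1)) := by
        rw [← dist_eq_norm]; exact hg'close.le
      exact mul_le_mul (hb _) h1 (norm_nonneg _) hM0
    have hd := hN m hm n hn
    rw [Real.dist_eq] at hd ⊢
    have hMε : M * (ε / (2 * (2 * M + 1))) ≤ ε / 4 := by
      rw [← mul_div_assoc, div_le_div_iff₀ (by positivity) (by norm_num)]
      nlinarith [hM0, hε.le]
    calc |⟪x (φ m), g⟫ - ⟪x (φ n), g⟫|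
        ≤ |⟪x (φ m), g⟫ - ⟪x (φ m), g'⟫| + |⟪x (φ m), g'⟫ - ⟪x (φ n), g'⟫|
          + |⟪x (φ n), g'⟫ - ⟪x (φ n), g⟫| := by
          have := abs_sub_le (⟪x (φ m), g⟫) (⟪x (φ m), g'⟫) (⟪x (φ n), g⟫)
          have h2 := abs_sub_le (⟪x (φ m), g'⟫) (⟪x (φ n), g'⟫) (⟪x (φ n), g⟫)
          linarith
      _ < ε := by
          have k1 := key m
          have k2 := key n
          rw [abs_sub_comm (⟪x (φ n), g'⟫)] at *
          linarith
  have hlim : ∀ h : H, ∃ a : ℝ, Tendsto (fun k => ⟪x (φ k), h⟫) atTop (𝓝 a) :=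
    fun h => cauchySeq_tendsto_of_complete (hcs h)
  choose L hL using hlim
  have hmap_add : ∀ h h', L (h + h') = L h + L h' := by
    intro h h'
    have t1 : Tendsto (fun k => ⟪x (φ k), h + h'⟫) atTop (𝓝 (L h + L h')) := by
      have heq : (fun k => ⟪x (φ k), h + h'⟫) = fun k => ⟪x (φ k), h⟫ + ⟪x (φ k), h'⟫ := by
        funext k; exact inner_add_right _ _ _
      rw [heq]; exact (hL h).add (hL h')
    exact tendsto_nhds_unique (hL _) t1
  have hmap_smul : ∀ (c : ℝ) h, L (c • h) = c * L h := by
    intro c h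
    have t1 : Tendsto (fun k => ⟪x (φ k), c • h⟫) atTop (𝓝 (c * L h)) := by
      have heq : (fun k => ⟪x (φ k), c • h⟫) = fun k => c * ⟪x (φ k), h⟫ := by
        funext k; exact real_inner_smul_right _ _ _
      rw [heq]; exact (hL h).const_mul c
    exact tendsto_nhds_unique (hL _) t1
  have hbound : ∀ h, |L h| ≤ M * ‖h‖ := by
    intro h
    have habs : Tendsto (fun k => |⟪x (φ k), h⟫|) atTop (𝓝 |L h|) := (hL h).abs
    refine le_of_tendsto habs (Eventually.of_forall fun k => ?_)
    refine le_trans (abs_real_inner_le_norm _ _) ?_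
    exact mul_le_mul_of_nonneg_right (hb _) (norm_nonneg _)
  set Llin : H →ₗ[ℝ] ℝ :=
    { toFun := L, map_add' := hmap_add, map_smul' := hmap_smul } with hLlin
  set Lcont : H →L[ℝ] ℝ := LinearMap.mkContinuous Llin M (fun h => by
    rw [Real.norm_eq_abs]; exact hbound h) with hLcont
  refine ⟨(InnerProductSpace.toDual ℝ H).symm Lcont, φ, hφ, fun h => ?_⟩
  have hrep : ⟪(InnerProductSpace.toDual ℝ H).symm Lcont, h⟫ = Lcont h :=
    InnerProductSpace.toDual_symm_apply
  rw [hrep]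
  exact hL h

end Weak
set_option maxHeartbeats 1600000 in
/-- Best approximation with three sets via strengthened Ryu splitting: `u_k → P_{C₁∩C₂∩C₃}(q)`
strongly; if `λ ≠ 1`, `(x_k)` converges weakly to a point `x` with
`P_{C₁}(βx + (1−β)q) = P_{C₁∩C₂∩C₃}(q)`. -/
theorem best_approximation_S_Ryu {H : Type*} [NormedAddCommGroup H]
    [InnerProductSpace ℝ H] [CompleteSpace H]
    (C₁ C₂ C₃ : Set H)
    (hC₁ : C₁.Nonempty ∧ IsClosed C₁ ∧ Convex ℝ C₁)
    (hC₂ : C₂.Nonempty ∧ IsClosed C₂ ∧ Convex ℝ C₂)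
    (hC₃ : C₃.Nonempty ∧ IsClosed C₃ ∧ Convex ℝ C₃)
    (hInt : (C₁ ∩ C₂ ∩ C₃).Nonempty)
    (P₁ P₂ P₃ PC : H → H)
    (hP₁ : IsProjector C₁ P₁) (hP₂ : IsProjector C₂ P₂) (hP₃ : IsProjector C₃ P₃)
    (hPC : IsProjector (C₁ ∩ C₂ ∩ C₃) PC)
    (q : H)
    (hq : ∃ x : H, ∃ u₁ ∈ normalCone C₁ x, ∃ u₂ ∈ normalCone C₂ x, ∃ u₃ ∈ normalCone C₃ x,
      q - x = u₁ + u₂ + u₃)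
    (β lam : ℝ) (hβ : 0 < β) (hβ' : β < 1) (hlam : 0 < lam) (hlam' : lam ≤ 1)
    (x y u v w : ℕ → H)
    (hu : ∀ k : ℕ, u k = P₁ (β • x k + (1 - β) • q))
    (hv : ∀ k : ℕ, v k = P₂ (β • (u k + y k) - (2 * β - 1) • q))
    (hw : ∀ k : ℕ, w k = P₃ (β • (u k - x k + v k - y k) + q))
    (hx : ∀ k : ℕ, x (k + 1) = x k + lam • (w k - u k))
    (hy : ∀ k : ℕ, y (k + 1) = y k + lam • (w k - v k)) :
    Tendsto u atTop (𝓝 (PC q)) ∧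
      (lam ≠ 1 →
        ∃ xl : H,
          (∀ z : H, Tendsto (fun k => ⟪x k, z⟫) atTop (𝓝 ⟪xl, z⟫)) ∧
            P₁ (β • xl + (1 - β) • q) = PC q) := by
  obtain ⟨-, -, hC₁cv⟩ := hC₁
  obtain ⟨-, -, hC₂cv⟩ := hC₂
  obtain ⟨-, -, hC₃cv⟩ := hC₃
  obtain ⟨ust, u₁, hu₁, u₂, hu₂, u₃, hu₃, hsum⟩ := hq
  have hβ0 : (β:ℝ) ≠ 0 := ne_of_gt hβ
  -- normal cone inclusions along the iterates
  have hNu : ∀ k, β • x k + (1 - β) • q - u k ∈ normalCone C₁ (u k) := by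
    intro k
    have := sRyu_isProjector_normalCone hC₁cv hP₁ (β • x k + (1 - β) • q)
    rwa [← hu k] at this
  have hNv : ∀ k, β • (u k + y k) - (2 * β - 1) • q - v k ∈ normalCone C₂ (v k) := by
    intro k
    have := sRyu_isProjector_normalCone hC₂cv hP₂ (β • (u k + y k) - (2 * β - 1) • q)
    rwa [← hv k] at this
  have hNw : ∀ k, β • (u k - x k + v k - y k) + q - w k ∈ normalCone C₃ (w k) := by
    intro k
    have := sRyu_isProjector_normalCone hC₃cv hP₃ (β • (u k - x k + v k - y k) + q)
    rwa [← hw k] at this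
  -- `ust` is the projection of `q` on the intersection
  have hPCq : PC q = ust := by
    apply sRyu_isProjector_eq ((hC₁cv.inter hC₂cv).inter hC₃cv) hPC
    refine ⟨⟨⟨hu₁.1, hu₂.1⟩, hu₃.1⟩, fun c hc => ?_⟩
    rw [hsum, inner_add_left, inner_add_left]
    linarith [hu₁.2 c hc.1.1, hu₂.2 c hc.1.2, hu₃.2 c hc.2]
  -- the fixed point (xs, ys)
  set ss : ℝ := 3 * (1 - β) with hssdef
  have hss : 0 ≤ ss := by nlinarith
  set xs : H := β⁻¹ • (ust - (1 - β) • q + ss • u₁) with hxsdef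
  set ys : H := β⁻¹ • (ss • u₂ + (1 - β) • ust + (2 * β - 1) • q) with hysdef
  have hβxs : β • xs = ust - (1 - β) • q + ss • u₁ := by
    rw [hxsdef, smul_smul, mul_inv_cancel₀ hβ0, one_smul]
  have hβys : β • ys = ss • u₂ + (1 - β) • ust + (2 * β - 1) • q := by
    rw [hysdef, smul_smul, mul_inv_cancel₀ hβ0, one_smul]
  have h1s : β • xs + (1 - β) • q - ust ∈ normalCone C₁ ust := by
    have heq : β • xs + (1 - β) • q - ust = ss • u₁ := by rw [hβxs]; abel
    rw [heq]; exact sRyu_normalCone_smul hss hu₁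
  have h2s : β • (ust + ys) - (2 * β - 1) • q - ust ∈ normalCone C₂ ust := by
    have heq : β • (ust + ys) - (2 * β - 1) • q - ust = ss • u₂ := by
      rw [smul_add, hβys]; module
    rw [heq]; exact sRyu_normalCone_smul hss hu₂
  have h3s : β • (ust - xs + ust - ys) + q - ust ∈ normalCone C₃ ust := by
    have heq : β • (ust - xs + ust - ys) + q - ust
        = ss • (q - ust) - ss • u₁ - ss • u₂ := by
      have e1 : β • (ust - xs + ust - ys) = β • ust - β • xs + β • ust - β • ys := by
        module
      rw [e1, hβxs, hβys, hssdef]; module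
    have heq2 : ss • (q - ust) - ss • u₁ - ss • u₂ = ss • u₃ := by
      rw [hsum]; module
    rw [heq, heq2]; exact sRyu_normalCone_smul hss hu₃
  -- the master Fejér inequality
  have hFej : ∀ (p r ub : H),
      β • p + (1 - β) • q - ub ∈ normalCone C₁ ub →
      β • (ub + r) - (2 * β - 1) • q - ub ∈ normalCone C₂ ub →
      β • (ub - p + ub - r) + q - ub ∈ normalCone C₃ ub →
      ∀ k : ℕ, ‖x (k + 1) - p‖ ^ 2 + ‖y (k + 1) - r‖ ^ 2
        + 2 * lam * (1 - β) / β * (‖u k - ub‖ ^ 2 + ‖v k - ub‖ ^ 2 + ‖w k - ub‖ ^ 2)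
        ≤ ‖x k - p‖ ^ 2 + ‖y k - r‖ ^ 2 := by
    intro p r ub h1 h2 h3 k
    have E1 : 0 ≤ ⟪β • (x k - p) - (u k - ub), u k - ub⟫ := by
      have hm := sRyu_normalCone_mono (hNu k) h1
      have heq : (β • x k + (1 - β) • q - u k) - (β • p + (1 - β) • q - ub)
          = β • (x k - p) - (u k - ub) := by module
      rwa [heq] at hm
    have E2 : 0 ≤ ⟪β • ((u k - ub) + (y k - r)) - (v k - ub), v k - ub⟫ := by
      have hm := sRyu_normalCone_mono (hNv k) h2
      have heq : (β • (u k + y k) - (2 * β - 1) • q - v k)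
            - (β • (ub + r) - (2 * β - 1) • q - ub)
          = β • ((u k - ub) + (y k - r)) - (v k - ub) := by module
      rwa [heq] at hm
    have E3 : 0 ≤ ⟪β • ((u k - ub) - (x k - p) + (v k - ub) - (y k - r)) - (w k - ub),
        w k - ub⟫ := by
      have hm := sRyu_normalCone_mono (hNw k) h3
      have heq : (β • (u k - x k + v k - y k) + q - w k)
            - (β • (ub - p + ub - r) + q - ub)
          = β • ((u k - ub) - (x k - p) + (v k - ub) - (y k - r)) - (w k - ub) := by module
      rwa [heq] at hm
    have hkey := sRyu_key_ineq β lam hβ hlam hlam' (x k - p) (y k - r)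
      (u k - ub) (v k - ub) (w k - ub) E1 E2 E3
    have hx1 : x (k + 1) - p = (x k - p) + lam • ((w k - ub) - (u k - ub)) := by
      rw [hx k]; module
    have hy1 : y (k + 1) - r = (y k - r) + lam • ((w k - ub) - (v k - ub)) := by
      rw [hy k]; module
    rw [hx1, hy1]
    exact hkey
  have hcpos : 0 < 2 * lam * (1 - β) / β := by
    apply div_pos (by nlinarith) hβ
  -- strong convergence of u, v, w
  have hdrop := fun k => hFej xs ys ust h1s h2s h3s k
  have hVanti : ∀ k, ‖x (k + 1) - xs‖ ^ 2 + ‖y (k + 1) - ys‖ ^ 2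
      ≤ ‖x k - xs‖ ^ 2 + ‖y k - ys‖ ^ 2 := by
    intro k
    have h0 : 0 ≤ 2 * lam * (1 - β) / β
        * (‖u k - ust‖ ^ 2 + ‖v k - ust‖ ^ 2 + ‖w k - ust‖ ^ 2) :=
      mul_nonneg hcpos.le (by positivity)
    linarith [hdrop k]
  have htel : ∀ n : ℕ, (‖x n - xs‖ ^ 2 + ‖y n - ys‖ ^ 2)
      + 2 * lam * (1 - β) / β * ∑ k ∈ Finset.range n,
        (‖u k - ust‖ ^ 2 + ‖v k - ust‖ ^ 2 + ‖w k - ust‖ ^ 2)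
      ≤ ‖x 0 - xs‖ ^ 2 + ‖y 0 - ys‖ ^ 2 := by
    intro n
    induction n with
    | zero => simp
    | succ n ih =>
      rw [Finset.sum_range_succ, mul_add]
      linarith [hdrop n, ih]
  have hsumle : ∀ n : ℕ, ∑ k ∈ Finset.range n,
      (‖u k - ust‖ ^ 2 + ‖v k - ust‖ ^ 2 + ‖w k - ust‖ ^ 2)
      ≤ (‖x 0 - xs‖ ^ 2 + ‖y 0 - ys‖ ^ 2) / (2 * lam * (1 - β) / β) := by
    intro n
    rw [le_div_iff₀ hcpos, mul_comm]
    have h1 := htel n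
    have h2 : 0 ≤ ‖x n - xs‖ ^ 2 + ‖y n - ys‖ ^ 2 := by positivity
    linarith
  have hSigSummable : Summable (fun k =>
      ‖u k - ust‖ ^ 2 + ‖v k - ust‖ ^ 2 + ‖w k - ust‖ ^ 2) :=
    summable_of_sum_range_le (fun k => by positivity) hsumle
  have hSig0 : Tendsto (fun k =>
      ‖u k - ust‖ ^ 2 + ‖v k - ust‖ ^ 2 + ‖w k - ust‖ ^ 2) atTop (𝓝 0) :=
    hSigSummable.tendsto_atTop_zero
  have hnormconv : ∀ (z : ℕ → H) (z0 : H),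
      Tendsto (fun k => ‖z k - z0‖ ^ 2) atTop (𝓝 0) → Tendsto z atTop (𝓝 z0) := by
    intro z z0 hz
    have h2 : Tendsto (fun k => Real.sqrt (‖z k - z0‖ ^ 2)) atTop (𝓝 0) := by
      have := (Real.continuous_sqrt.tendsto 0).comp hz
      simpa [Function.comp_def] using this
    have h3 : (fun k => Real.sqrt (‖z k - z0‖ ^ 2)) = fun k => ‖z k - z0‖ :=
      funext fun k => Real.sqrt_sq (norm_nonneg _)
    rw [h3] at h2
    exact tendsto_iff_norm_sub_tendsto_zero.mpr h2
  have huconv : Tendsto u atTop (𝓝 ust) := by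
    apply hnormconv
    apply squeeze_zero (fun k => sq_nonneg _) _ hSig0
    intro k
    nlinarith [sq_nonneg ‖v k - ust‖, sq_nonneg ‖w k - ust‖]
  have hvconv : Tendsto v atTop (𝓝 ust) := by
    apply hnormconv
    apply squeeze_zero (fun k => sq_nonneg _) _ hSig0
    intro k
    nlinarith [sq_nonneg ‖u k - ust‖, sq_nonneg ‖w k - ust‖]
  have hwconv : Tendsto w atTop (𝓝 ust) := by
    apply hnormconv
    apply squeeze_zero (fun k => sq_nonneg _) _ hSig0
    intro k
    nlinarith [sq_nonneg ‖u k - ust‖, sq_nonneg ‖v k - ust‖]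
  constructor
  · rw [hPCq]; exact huconv
  intro _
  -- boundedness of the iterates
  have hVle : ∀ k, ‖x k - xs‖ ^ 2 + ‖y k - ys‖ ^ 2 ≤ ‖x 0 - xs‖ ^ 2 + ‖y 0 - ys‖ ^ 2 := by
    intro k
    induction k with
    | zero => exact le_rfl
    | succ k ih => exact le_trans (hVanti k) ih
  set M : ℝ := Real.sqrt (‖x 0 - xs‖ ^ 2 + ‖y 0 - ys‖ ^ 2) + (‖xs‖ + ‖ys‖) with hMdef
  have hsqrtle : ∀ k (a : H), ‖x k - xs‖ ^ 2 + ‖y k - ys‖ ^ 2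
      ≤ ‖x 0 - xs‖ ^ 2 + ‖y 0 - ys‖ ^ 2 → True := fun _ _ _ => trivial
  have hbx : ∀ k, ‖x k‖ ≤ M := by
    intro k
    have h1 : ‖x k - xs‖ ^ 2 ≤ ‖x 0 - xs‖ ^ 2 + ‖y 0 - ys‖ ^ 2 := by
      have := hVle k
      nlinarith [sq_nonneg ‖y k - ys‖]
    have h2 : ‖x k - xs‖ ≤ Real.sqrt (‖x 0 - xs‖ ^ 2 + ‖y 0 - ys‖ ^ 2) := by
      have := Real.sqrt_le_sqrt h1
      rwa [Real.sqrt_sq (norm_nonneg _)] at this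
    calc ‖x k‖ = ‖(x k - xs) + xs‖ := by rw [sub_add_cancel]
      _ ≤ ‖x k - xs‖ + ‖xs‖ := norm_add_le _ _
      _ ≤ M := by rw [hMdef]; linarith [norm_nonneg ys]
  have hby : ∀ k, ‖y k‖ ≤ M := by
    intro k
    have h1 : ‖y k - ys‖ ^ 2 ≤ ‖x 0 - xs‖ ^ 2 + ‖y 0 - ys‖ ^ 2 := by
      have := hVle k
      nlinarith [sq_nonneg ‖x k - xs‖]
    have h2 : ‖y k - ys‖ ≤ Real.sqrt (‖x 0 - xs‖ ^ 2 + ‖y 0 - ys‖ ^ 2) := by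
      have := Real.sqrt_le_sqrt h1
      rwa [Real.sqrt_sq (norm_nonneg _)] at this
    calc ‖y k‖ = ‖(y k - ys) + ys‖ := by rw [sub_add_cancel]
      _ ≤ ‖y k - ys‖ + ‖ys‖ := norm_add_le _ _
      _ ≤ M := by rw [hMdef]; linarith [norm_nonneg xs]
  -- weak–strong inner-product limits
  have wk : ∀ (ρ : ℕ → ℕ) (p r : H),
      (∀ h : H, Tendsto (fun k => ⟪x (ρ k), h⟫) atTop (𝓝 ⟪p, h⟫)) →
      (∀ h : H, Tendsto (fun k => ⟪y (ρ k), h⟫) atTop (𝓝 ⟪r, h⟫)) →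
      ∀ (cx cy : ℝ) (s : ℕ → H) (s0 : H), Tendsto s atTop (𝓝 s0) →
      ∀ (b : ℕ → H) (b0 : H), Tendsto b atTop (𝓝 b0) →
      Tendsto (fun k => ⟪cx • x (ρ k) + cy • y (ρ k) + s k, b k⟫) atTop
        (𝓝 ⟪cx • p + cy • r + s0, b0⟫) := by
    intro ρ p r hxp hyr cx cy s s0 hs b b0 hb
    have h2 : Tendsto (fun k => ⟪cx • x (ρ k) + cy • y (ρ k) + s k, b0⟫) atTop
        (𝓝 ⟪cx • p + cy • r + s0, b0⟫) := by
      simp only [inner_add_left, real_inner_smul_left]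
      exact (((hxp b0).const_mul cx).add ((hyr b0).const_mul cy)).add
        (hs.inner tendsto_const_nhds)
    have hsb : ∀ᶠ k in atTop, ‖s k‖ ≤ ‖s0‖ + 1 :=
      hs.norm.eventually (eventually_le_nhds (lt_add_one _))
    have h1 : Tendsto (fun k => ⟪cx • x (ρ k) + cy • y (ρ k) + s k, b k - b0⟫) atTop
        (𝓝 0) := by
      apply squeeze_zero_norm' (a := fun k => (|cx| * M + |cy| * M + (‖s0‖ + 1)) * ‖b k - b0‖)
      · filter_upwards [hsb] with k hk
        have hna : ‖cx • x (ρ k) + cy • y (ρ k) + s k‖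
            ≤ |cx| * M + |cy| * M + (‖s0‖ + 1) := by
          have t1 : ‖cx • x (ρ k) + cy • y (ρ k) + s k‖
              ≤ ‖cx • x (ρ k)‖ + ‖cy • y (ρ k)‖ + ‖s k‖ := by
            calc ‖cx • x (ρ k) + cy • y (ρ k) + s k‖
                ≤ ‖cx • x (ρ k) + cy • y (ρ k)‖ + ‖s k‖ := norm_add_le _ _
              _ ≤ ‖cx • x (ρ k)‖ + ‖cy • y (ρ k)‖ + ‖s k‖ := by
                  linarith [norm_add_le (cx • x (ρ k)) (cy • y (ρ k))]
          have t2 : ‖cx • x (ρ k)‖ ≤ |cx| * M := by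
            rw [norm_smul, Real.norm_eq_abs]
            exact mul_le_mul_of_nonneg_left (hbx _) (abs_nonneg _)
          have t3 : ‖cy • y (ρ k)‖ ≤ |cy| * M := by
            rw [norm_smul, Real.norm_eq_abs]
            exact mul_le_mul_of_nonneg_left (hby _) (abs_nonneg _)
          linarith
        calc ‖⟪cx • x (ρ k) + cy • y (ρ k) + s k, b k - b0⟫‖
            = |⟪cx • x (ρ k) + cy • y (ρ k) + s k, b k - b0⟫| := Real.norm_eq_abs _
          _ ≤ ‖cx • x (ρ k) + cy • y (ρ k) + s k‖ * ‖b k - b0‖ :=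
              abs_real_inner_le_norm _ _
          _ ≤ (|cx| * M + |cy| * M + (‖s0‖ + 1)) * ‖b k - b0‖ :=
              mul_le_mul_of_nonneg_right hna (norm_nonneg _)
      · have hbb : Tendsto (fun k => ‖b k - b0‖) atTop (𝓝 0) :=
          tendsto_iff_norm_sub_tendsto_zero.mp hb
        have := hbb.const_mul (|cx| * M + |cy| * M + (‖s0‖ + 1))
        simpa using this
    have hcomb := h1.add h2
    have heq : (fun k => ⟪cx • x (ρ k) + cy • y (ρ k) + s k, b k - b0⟫
        + ⟪cx • x (ρ k) + cy • y (ρ k) + s k, b0⟫)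
        = fun k => ⟪cx • x (ρ k) + cy • y (ρ k) + s k, b k⟫ := by
      funext k; rw [inner_sub_right]; ring
    rw [heq, zero_add] at hcomb
    exact hcomb
  -- every weak cluster pair gives shadows at `ust`
  have shadow : ∀ (ρ : ℕ → ℕ), StrictMono ρ → ∀ p r : H,
      (∀ h : H, Tendsto (fun k => ⟪x (ρ k), h⟫) atTop (𝓝 ⟪p, h⟫)) →
      (∀ h : H, Tendsto (fun k => ⟪y (ρ k), h⟫) atTop (𝓝 ⟪r, h⟫)) →
      (β • p + (1 - β) • q - ust ∈ normalCone C₁ ust) ∧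
      (β • (ust + r) - (2 * β - 1) • q - ust ∈ normalCone C₂ ust) ∧
      (β • (ust - p + ust - r) + q - ust ∈ normalCone C₃ ust) := by
    intro ρ hρ p r hxp hyr
    have huρ : Tendsto (fun k => u (ρ k)) atTop (𝓝 ust) := huconv.comp hρ.tendsto_atTop
    have hvρ : Tendsto (fun k => v (ρ k)) atTop (𝓝 ust) := hvconv.comp hρ.tendsto_atTop
    have hwρ : Tendsto (fun k => w (ρ k)) atTop (𝓝 ust) := hwconv.comp hρ.tendsto_atTop
    refine ⟨⟨hu₁.1, fun c hc => ?_⟩, ⟨hu₂.1, fun c hc => ?_⟩, ⟨hu₃.1, fun c hc => ?_⟩⟩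
    · have hlim := wk ρ p r hxp hyr β 0 (fun k => (1 - β) • q - u (ρ k)) ((1 - β) • q - ust)
        (tendsto_const_nhds.sub huρ) (fun k => c - u (ρ k)) (c - ust)
        (tendsto_const_nhds.sub huρ)
      have hvec : β • p + (0:ℝ) • r + ((1 - β) • q - ust) = β • p + (1 - β) • q - ust := by
        module
      rw [hvec] at hlim
      have hfun : (fun k => ⟪β • x (ρ k) + (0:ℝ) • y (ρ k) + ((1 - β) • q - u (ρ k)),
            c - u (ρ k)⟫)
          = fun k => ⟪β • x (ρ k) + (1 - β) • q - u (ρ k), c - u (ρ k)⟫ := by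
        funext k
        congr 1
        module
      rw [hfun] at hlim
      refine le_of_tendsto hlim (Eventually.of_forall fun k => ?_)
      exact (hNu (ρ k)).2 c hc
    · have hlim := wk ρ p r hxp hyr 0 β
        (fun k => β • u (ρ k) - (2 * β - 1) • q - v (ρ k)) (β • ust - (2 * β - 1) • q - ust)
        (((huρ.const_smul β).sub tendsto_const_nhds).sub hvρ)
        (fun k => c - v (ρ k)) (c - ust) (tendsto_const_nhds.sub hvρ)
      have hvec : (0:ℝ) • p + β • r + (β • ust - (2 * β - 1) • q - ust)
          = β • (ust + r) - (2 * β - 1) • q - ust := by module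
      rw [hvec] at hlim
      have hfun : (fun k => ⟪(0:ℝ) • x (ρ k) + β • y (ρ k)
            + (β • u (ρ k) - (2 * β - 1) • q - v (ρ k)), c - v (ρ k)⟫)
          = fun k => ⟪β • (u (ρ k) + y (ρ k)) - (2 * β - 1) • q - v (ρ k), c - v (ρ k)⟫ := by
        funext k
        congr 1
        module
      rw [hfun] at hlim
      refine le_of_tendsto hlim (Eventually.of_forall fun k => ?_)
      exact (hNv (ρ k)).2 c hc
    · have hlim := wk ρ p r hxp hyr (-β) (-β)
        (fun k => β • u (ρ k) + β • v (ρ k) + q - w (ρ k)) (β • ust + β • ust + q - ust)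
        ((((huρ.const_smul β).add (hvρ.const_smul β)).add tendsto_const_nhds).sub hwρ)
        (fun k => c - w (ρ k)) (c - ust) (tendsto_const_nhds.sub hwρ)
      have hvec : (-β) • p + (-β) • r + (β • ust + β • ust + q - ust)
          = β • (ust - p + ust - r) + q - ust := by module
      rw [hvec] at hlim
      have hfun : (fun k => ⟪(-β) • x (ρ k) + (-β) • y (ρ k)
            + (β • u (ρ k) + β • v (ρ k) + q - w (ρ k)), c - w (ρ k)⟫)
          = fun k => ⟪β • (u (ρ k) - x (ρ k) + v (ρ k) - y (ρ k)) + q - w (ρ k),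
              c - w (ρ k)⟫ := by
        funext k
        congr 1
        module
      rw [hfun] at hlim
      refine le_of_tendsto hlim (Eventually.of_forall fun k => ?_)
      exact (hNw (ρ k)).2 c hc
  -- weak cluster pairs exist along any subsequence
  have cluster : ∀ (ψ : ℕ → ℕ), StrictMono ψ → ∃ p r : H, ∃ φ' : ℕ → ℕ, StrictMono φ' ∧
      (∀ h : H, Tendsto (fun k => ⟪x (ψ (φ' k)), h⟫) atTop (𝓝 ⟪p, h⟫)) ∧
      (∀ h : H, Tendsto (fun k => ⟪y (ψ (φ' k)), h⟫) atTop (𝓝 ⟪r, h⟫)) := by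
    intro ψ hψ
    obtain ⟨p, φ1, hφ1, hp⟩ := sRyu_exists_weak_subseq (fun k => x (ψ k)) M (fun k => hbx _)
    obtain ⟨r, φ2, hφ2, hr⟩ :=
      sRyu_exists_weak_subseq (fun k => y (ψ (φ1 k))) M (fun k => hby _)
    refine ⟨p, r, φ1 ∘ φ2, hφ1.comp hφ2, fun h => ?_, fun h => hr h⟩
    exact (hp h).comp hφ2.tendsto_atTop
  -- Fejér limits exist for every cluster fixed pair
  have hVlim : ∀ p r : H,
      β • p + (1 - β) • q - ust ∈ normalCone C₁ ust →
      β • (ust + r) - (2 * β - 1) • q - ust ∈ normalCone C₂ ust →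
      β • (ust - p + ust - r) + q - ust ∈ normalCone C₃ ust →
      ∃ A : ℝ, Tendsto (fun k => ‖x k - p‖ ^ 2 + ‖y k - r‖ ^ 2) atTop (𝓝 A) := by
    intro p r h1 h2 h3
    have hanti : Antitone (fun k => ‖x k - p‖ ^ 2 + ‖y k - r‖ ^ 2) := by
      apply antitone_nat_of_succ_le
      intro n
      have hh := hFej p r ust h1 h2 h3 n
      have h0 : 0 ≤ 2 * lam * (1 - β) / β
          * (‖u n - ust‖ ^ 2 + ‖v n - ust‖ ^ 2 + ‖w n - ust‖ ^ 2) :=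
        mul_nonneg hcpos.le (by positivity)
      linarith
    refine ⟨_, tendsto_atTop_ciInf hanti ⟨0, ?_⟩⟩
    rintro a ⟨n, rfl⟩
    positivity
  -- the main cluster pair
  obtain ⟨p, r, φ0, hφ0, hxp, hyr⟩ := cluster id strictMono_id
  have hxp' : ∀ h : H, Tendsto (fun k => ⟪x (φ0 k), h⟫) atTop (𝓝 ⟪p, h⟫) := hxp
  have hyr' : ∀ h : H, Tendsto (fun k => ⟪y (φ0 k), h⟫) atTop (𝓝 ⟪r, h⟫) := hyr
  obtain ⟨hs1, hs2, hs3⟩ := shadow φ0 hφ0 p r hxp' hyr'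
  refine ⟨p, fun h => ?_, ?_⟩
  · -- full weak convergence of x to p
    by_contra hcon
    rw [Metric.tendsto_atTop] at hcon
    push_neg at hcon
    obtain ⟨ε, hε, hfreq⟩ := hcon
    obtain ⟨ψ, hψ, hψprop⟩ := extraction_of_frequently_atTop (frequently_atTop.mpr hfreq)
    obtain ⟨p', r', φ', hφ', hxq, hyq⟩ := cluster ψ hψ
    obtain ⟨hs1', hs2', hs3'⟩ := shadow (fun k => ψ (φ' k)) (hψ.comp hφ') p' r' hxq hyq
    obtain ⟨A, hA⟩ := hVlim p r hs1 hs2 hs3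
    obtain ⟨B, hB⟩ := hVlim p' r' hs1' hs2' hs3'
    have hekid : ∀ k : ℕ, ⟪x k, p - p'⟫ + ⟪y k, r - r'⟫
        = ((‖p‖ ^ 2 + ‖r‖ ^ 2 - ‖p'‖ ^ 2 - ‖r'‖ ^ 2)
          - ((‖x k - p‖ ^ 2 + ‖y k - r‖ ^ 2) - (‖x k - p'‖ ^ 2 + ‖y k - r'‖ ^ 2))) / 2 := by
      intro k
      rw [norm_sub_sq_real, norm_sub_sq_real, norm_sub_sq_real, norm_sub_sq_real,
        inner_sub_right, inner_sub_right]
      ring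
    have he : Tendsto (fun k => ⟪x k, p - p'⟫ + ⟪y k, r - r'⟫) atTop
        (𝓝 (((‖p‖ ^ 2 + ‖r‖ ^ 2 - ‖p'‖ ^ 2 - ‖r'‖ ^ 2) - (A - B)) / 2)) := by
      have h0 : (fun k => ⟪x k, p - p'⟫ + ⟪y k, r - r'⟫)
          = fun k => ((‖p‖ ^ 2 + ‖r‖ ^ 2 - ‖p'‖ ^ 2 - ‖r'‖ ^ 2)
            - ((‖x k - p‖ ^ 2 + ‖y k - r‖ ^ 2) - (‖x k - p'‖ ^ 2 + ‖y k - r'‖ ^ 2))) / 2 :=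
        funext hekid
      rw [h0]
      exact (tendsto_const_nhds.sub (hA.sub hB)).div_const 2
    have l1 : ⟪p, p - p'⟫ + ⟪r, r - r'⟫
        = ((‖p‖ ^ 2 + ‖r‖ ^ 2 - ‖p'‖ ^ 2 - ‖r'‖ ^ 2) - (A - B)) / 2 :=
      tendsto_nhds_unique ((hxp' (p - p')).add (hyr' (r - r')))
        (he.comp hφ0.tendsto_atTop)
    have l2 : ⟪p', p - p'⟫ + ⟪r', r - r'⟫
        = ((‖p‖ ^ 2 + ‖r‖ ^ 2 - ‖p'‖ ^ 2 - ‖r'‖ ^ 2) - (A - B)) / 2 :=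
      tendsto_nhds_unique ((hxq (p - p')).add (hyq (r - r')))
        (he.comp ((hψ.comp hφ').tendsto_atTop))
    have hzero : ⟪p - p', p - p'⟫ + ⟪r - r', r - r'⟫ = 0 := by
      rw [inner_sub_left, inner_sub_left]
      linarith
    have hpp' : p = p' := by
      have h1 : (0:ℝ) ≤ ⟪p - p', p - p'⟫ := real_inner_self_nonneg
      have h2 : (0:ℝ) ≤ ⟪r - r', r - r'⟫ := real_inner_self_nonneg
      have h3 : ⟪p - p', p - p'⟫ = 0 := by linarith
      have h4 := inner_self_eq_zero.mp (by exact_mod_cast h3)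
      have h5 : p - p' = 0 := by exact_mod_cast h4
      exact sub_eq_zero.mp h5
    have hcontr : Tendsto (fun k => ⟪x (ψ (φ' k)), h⟫) atTop (𝓝 ⟪p, h⟫) := by
      rw [hpp']; exact hxq h
    have hev : ∀ᶠ k in atTop, dist ⟪x (ψ (φ' k)), h⟫ ⟪p, h⟫ < ε :=
      Metric.tendsto_nhds.mp hcontr ε hε
    obtain ⟨k, hk⟩ := hev.exists
    exact absurd (hψprop (φ' k)) (not_le.mpr hk)
  · rw [hPCq]
    exact sRyu_isProjector_eq hC₁cv hP₁ hs1
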